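/- Let L ≥ 2 be an integer and let c_0, …, c_{L−1} be complex numbers, each of which is either zero or of modulus 1, and not all zero. Let p(t) = ∑_{m=0}^{L−1} c_m e^{2πimt}. Then t ↦ log|p(t)| is Lebesgue integrable on [0,1] and ∫_0^1 log|p(t)| dt < (1/2) log L. -/

import Mathlib

open MeasureTheory Real Set

set_option maxHeartbeats 1000000

namespace MahlerAux

-- log integrable on positive side
lemma logInt_pos (R : ℝ) (hR : 0 < R) :
    IntegrableOn Real.log (Set.Ioo 0 R) volume := by
  have h1 : IntegrableOn (fun x => Real.log R - Real.log x) (Set.Ioc 0 R) volume := by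
    apply intervalIntegral.integrableOn_deriv_of_nonneg (g := fun s => s + s * Real.log R - s * Real.log s)
    · apply ContinuousOn.sub
      · exact (continuous_id.add (continuous_id.mul continuous_const)).continuousOn
      · exact Real.continuous_mul_log.continuousOn
    · intro x hx
      have hx0 : x ≠ 0 := ne_of_gt hx.1
      have h2 : HasDerivAt (fun s : ℝ => s * Real.log s) (Real.log x + 1) x := by
        have := (hasDerivAt_id x).mul (Real.hasDerivAt_log hx0)
        exact this.congr_deriv (by simp [hx0])
      have h3 : HasDerivAt (fun s : ℝ => s + s * Real.log R) (1 + Real.log R) x := by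
        exact ((hasDerivAt_id' x).add ((hasDerivAt_id' x).mul_const (Real.log R))).congr_deriv (by ring)
      exact (h3.sub h2).congr_deriv (by ring)
    · intro x hx
      have := Real.log_le_log (hx.1) hx.2.le
      linarith
  have h2 : IntegrableOn (fun _ : ℝ => Real.log R) (Set.Ioc 0 R) volume := by
    exact integrableOn_const (by simp [Real.volume_Ioc])
  have h3 : IntegrableOn Real.log (Set.Ioc 0 R) volume := by
    have hsub : IntegrableOn ((fun _ : ℝ => Real.log R) - fun x => Real.log R - Real.log x)
        (Set.Ioc 0 R) volume := h2.sub h1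
    apply hsub.congr_fun _ measurableSet_Ioc
    intro x hx; simp
  exact h3.mono_set Set.Ioo_subset_Ioc_self

lemma logAbsInt (a b : ℝ) : IntervalIntegrable (fun s => Real.log |s|) volume a b := by
  set R : ℝ := max |a| |b| + 1 with hRdef
  have hR : 0 < R := by positivity
  have hpos : IntegrableOn (fun s => Real.log |s|) (Set.Ioo 0 R) volume := by
    apply (logInt_pos R hR).congr_fun _ measurableSet_Ioo
    intro x hx; simp [abs_of_pos hx.1]
  have hneg : IntegrableOn (fun s => Real.log |s|) (Set.Ioo (-R) 0) volume := by
    have h1 : IntegrableOn (fun x => Real.log R - Real.log (-x)) (Set.Ioc (-R) 0) volume := by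
      apply intervalIntegral.integrableOn_deriv_of_nonneg (g := fun s => s + s * Real.log R - s * Real.log (-s))
      · apply ContinuousOn.sub
        · exact (continuous_id.add (continuous_id.mul continuous_const)).continuousOn
        · have : Continuous fun s : ℝ => -((-s) * Real.log (-s)) :=
            (Real.continuous_mul_log.comp continuous_neg).neg
          simpa using this.continuousOn
      · intro x hx
        have hx0 : -x ≠ 0 := by nlinarith [hx.2]
        have h2 : HasDerivAt (fun s : ℝ => s * Real.log (-s)) (Real.log (-x) + 1) x := by
          have hlog : HasDerivAt (fun s : ℝ => Real.log (-s)) ((-x)⁻¹ * (-1)) x :=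
            (Real.hasDerivAt_log hx0).comp x (hasDerivAt_neg x)
          have := (hasDerivAt_id x).mul hlog
          have hx0' : x ≠ 0 := by intro h; apply hx0; simp [h]
          exact this.congr_deriv (by simp [hx0'])
        have h3 : HasDerivAt (fun s : ℝ => s + s * Real.log R) (1 + Real.log R) x := by
          exact ((hasDerivAt_id' x).add ((hasDerivAt_id' x).mul_const (Real.log R))).congr_deriv (by ring)
        exact (h3.sub h2).congr_deriv (by ring)
      · intro x hx
        have : -x ≤ R := by linarith [hx.1]
        have := Real.log_le_log (by linarith [hx.2] : (0:ℝ) < -x) this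
        linarith
    have h2 : IntegrableOn (fun _ : ℝ => Real.log R) (Set.Ioc (-R) 0) volume := by
      exact integrableOn_const (by simp [Real.volume_Ioc])
    have h3 : IntegrableOn (fun x => Real.log (-x)) (Set.Ioc (-R) 0) volume := by
      have hsub : IntegrableOn ((fun _ : ℝ => Real.log R) - fun x => Real.log R - Real.log (-x))
          (Set.Ioc (-R) 0) volume := h2.sub h1
      apply hsub.congr_fun _ measurableSet_Ioc
      intro x hx; simp
    apply (h3.mono_set Set.Ioo_subset_Ioc_self).congr_fun _ measurableSet_Ioo
    intro x hx; simp [abs_of_neg hx.2]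
  have hsing : IntegrableOn (fun s => Real.log |s|) ({0} : Set ℝ) volume := by
    unfold IntegrableOn
    rw [Measure.restrict_eq_zero.2 (by simp)]
    exact integrable_zero_measure
  have hbig : IntegrableOn (fun s => Real.log |s|) (Set.Ioo (-R) 0 ∪ Set.Ioo 0 R ∪ {0}) volume :=
    (hneg.union hpos).union hsing
  rw [intervalIntegrable_iff]
  apply hbig.mono_set
  intro x hx
  have h1 : |x| ≤ max |a| |b| := by
    rw [Set.uIoc, Set.mem_Ioc] at hx
    rw [abs_le]
    constructor
    · have : -(max |a| |b|) ≤ min a b := le_min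
        (by linarith [neg_abs_le a, le_max_left |a| |b|])
        (by linarith [neg_abs_le b, le_max_right |a| |b|])
      linarith [hx.1]
    · have : max a b ≤ max |a| |b| := max_le_max (le_abs_self a) (le_abs_self b)
      linarith [hx.2]
  have hxR : -R < x ∧ x < R := by
    have := abs_le.1 h1
    constructor <;> [linarith [this.1]; linarith [this.2]]
  rcases lt_trichotomy x 0 with h | h | h
  · exact Or.inl (Or.inl ⟨hxR.1, h⟩)
  · exact Or.inr (by simp [h])
  · exact Or.inl (Or.inr ⟨h, hxR.2⟩)


lemma logAbsSubInt (a b c : ℝ) :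
    IntervalIntegrable (fun s => Real.log |s - c|) volume a b := by
  have := (logAbsInt (a - c) (b - c)).comp_sub_right c
  simpa using this

lemma sinLow {s : ℝ} (h1 : -(1/2:ℝ) ≤ s) (h2 : s ≤ 3/2) :
    |s| * |s - 1| ≤ |Real.sin (π * s)| := by
  have hpi := Real.pi_gt_three
  rcases le_total s (1/2) with h | h
  · have hb : |π * s| ≤ π / 2 := by
      rw [abs_mul, abs_of_pos Real.pi_pos]
      have : |s| ≤ 1/2 := abs_le.2 ⟨by linarith, h⟩
      nlinarith
    have := Real.mul_abs_le_abs_sin hb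
    have h2s : 2 / π * |π * s| = 2 * |s| := by
      rw [abs_mul, abs_of_pos Real.pi_pos]
      field_simp
    rw [h2s] at this
    have hs1 : |s - 1| ≤ 2 := abs_le.2 ⟨by linarith, by linarith⟩
    nlinarith [abs_nonneg s, abs_nonneg (s-1)]
  · have hb : |π * (s - 1)| ≤ π / 2 := by
      rw [abs_mul, abs_of_pos Real.pi_pos]
      have : |s - 1| ≤ 1/2 := abs_le.2 ⟨by linarith, by linarith⟩
      nlinarith
    have key := Real.mul_abs_le_abs_sin hb
    have h2s : 2 / π * |π * (s - 1)| = 2 * |s - 1| := by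
      rw [abs_mul, abs_of_pos Real.pi_pos]
      field_simp
    rw [h2s] at key
    have heq : |Real.sin (π * (s - 1))| = |Real.sin (π * s)| := by
      have : π * (s - 1) = π * s - π := by ring
      rw [this, Real.sin_sub_pi, abs_neg]
    rw [heq] at key
    have hs1 : |s| ≤ 2 := abs_le.2 ⟨by linarith, by linarith⟩
    nlinarith [abs_nonneg s, abs_nonneg (s-1)]

lemma logSinInt (θ : ℝ) (hθ1 : -(1/2:ℝ) < θ) (hθ2 : θ ≤ 1/2) :
    IntegrableOn (fun t => Real.log |Real.sin (π * (t - θ))|) (Set.Icc (0:ℝ) 1) volume := by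
  -- first: integrable on Icc (-(1/2)) (3/2) of log |sin (π s)|
  have hmeas : Measurable fun s : ℝ => Real.log |Real.sin (π * s)| :=
    Real.measurable_log.comp (Real.continuous_sin.comp (continuous_const.mul continuous_id)).abs.measurable
  have hbnd : IntegrableOn (fun s => Real.log |Real.sin (π * s)|)
      (Set.Icc (-(1/2):ℝ) (3/2)) volume := by
    have hg : IntegrableOn (fun s => abs (Real.log |s|) + abs (Real.log |s - 1|))
        (Set.Icc (-(1/2):ℝ) (3/2)) volume := by
      have g1 := (logAbsInt (-(1/2)) (3/2))
      have g2 := (logAbsSubInt (-(1/2)) (3/2) 1)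
      rw [intervalIntegrable_iff_integrableOn_Icc_of_le (by norm_num)] at g1 g2
      exact g1.abs.add g2.abs
    apply Integrable.mono' hg (hmeas.aestronglyMeasurable.restrict)
    have hae : ∀ᵐ s ∂(volume.restrict (Set.Icc (-(1/2):ℝ) (3/2))), s ≠ 0 ∧ s ≠ 1 := by
      have hnull : volume {s : ℝ | ¬(s ≠ 0 ∧ s ≠ 1)} = 0 := by
        have hset : {s : ℝ | ¬(s ≠ 0 ∧ s ≠ 1)} = {0, 1} := by
          ext x
          simp [not_and_or, Set.mem_insert_iff, Set.mem_singleton_iff]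
          tauto
        rw [hset]
        exact ((Set.countable_singleton (1:ℝ)).insert 0).measure_zero volume
      exact ae_restrict_of_ae (ae_iff.2 hnull)
    filter_upwards [hae, ae_restrict_mem measurableSet_Icc] with s hs hmem
    obtain ⟨hs0, hs1⟩ := hs
    have hlow := sinLow hmem.1 hmem.2
    have hpos : 0 < |s| * |s - 1| := by
      apply mul_pos <;> [exact abs_pos.2 hs0; exact abs_pos.2 (sub_ne_zero.2 hs1)]
    have hsin_pos : 0 < |Real.sin (π * s)| := lt_of_lt_of_le hpos hlow
    have hup : |Real.sin (π * s)| ≤ 1 := Real.abs_sin_le_one _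
    rw [Real.norm_eq_abs, abs_of_nonpos (Real.log_nonpos (abs_nonneg _) hup)]
    have hmono := Real.log_le_log hpos hlow
    rw [Real.log_mul (ne_of_gt (abs_pos.2 hs0)) (ne_of_gt (abs_pos.2 (sub_ne_zero.2 hs1)))] at hmono
    have e1 := le_abs_self (Real.log |s|)
    have e2 := le_abs_self (Real.log |s - 1|)
    have e1' := neg_abs_le (Real.log |s|)
    have e2' := neg_abs_le (Real.log |s - 1|)
    linarith
  -- now shift
  have hshift : IntervalIntegrable (fun t => Real.log |Real.sin (π * (t - θ))|) volume
      (-(1/2) + θ) (3/2 + θ) := by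
    have : IntervalIntegrable (fun s => Real.log |Real.sin (π * s)|) volume (-(1/2)) (3/2) := by
      rw [intervalIntegrable_iff_integrableOn_Icc_of_le (by norm_num)]
      exact hbnd
    exact this.comp_sub_right θ
  have hmono : IntervalIntegrable (fun t => Real.log |Real.sin (π * (t - θ))|) volume 0 1 := by
    apply hshift.mono_set
    rw [Set.uIcc_of_le (by norm_num : (0:ℝ) ≤ 1), Set.uIcc_of_le (by linarith : -(1/2) + θ ≤ 3/2 + θ)]
    apply Set.Icc_subset_Icc <;> linarith
  rw [intervalIntegrable_iff_integrableOn_Icc_of_le (by norm_num : (0:ℝ) ≤ 1)] at hmono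
  exact hmono


noncomputable def E (t : ℝ) : ℂ := Complex.exp (2 * (π:ℂ) * Complex.I * t)

lemma absE (t : ℝ) : ‖E t‖ = 1 := by
  simp [E, Complex.norm_exp, Complex.mul_re, Complex.mul_im]

lemma sin_identity (z : ℂ) : 2 * Complex.sin z * Complex.I
    = Complex.exp (z * Complex.I) - Complex.exp (-(z * Complex.I)) := by
  rw [Complex.sin]
  have : Complex.I * Complex.I = -1 := Complex.I_mul_I
  field_simp
  ring_nf
  rw [Complex.I_sq]
  ring

lemma key_abs (θ t : ℝ) : ‖E t - E θ‖ = 2 * |Real.sin (π * (t - θ))| := by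
  have h1 : E t - E θ = E θ * (Complex.exp ((π:ℂ) * ((t - θ : ℝ):ℂ) * Complex.I)
      * (2 * Complex.sin ((π:ℂ) * ((t - θ : ℝ):ℂ)) * Complex.I)) := by
    rw [sin_identity]
    rw [mul_sub, ← Complex.exp_add, ← Complex.exp_add]
    rw [E, E, mul_sub, ← Complex.exp_add, ← Complex.exp_add]
    congr 2 <;> push_cast <;> ring
  rw [h1]
  rw [norm_mul, norm_mul, norm_mul, norm_mul, absE]
  have h2 : ‖Complex.exp ((π:ℂ) * ((t - θ : ℝ):ℂ) * Complex.I)‖ = 1 := by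
    rw [← Complex.ofReal_mul, Complex.norm_exp]
    simp
  have h3 : Complex.sin ((π:ℂ) * ((t - θ : ℝ):ℂ)) = ((Real.sin (π * (t - θ)) : ℝ) : ℂ) := by
    rw [← Complex.ofReal_mul]
    exact (Complex.ofReal_sin _).symm
  rw [h2, h3]
  rw [Complex.norm_two, Complex.norm_I, Complex.norm_real, Real.norm_eq_abs]
  ring

lemma rootInt (α : ℂ) :
    IntegrableOn (fun t : ℝ => Real.log (‖E t - α‖)) (Set.Icc (0:ℝ) 1) volume := by
  by_cases hα : ‖α‖ = 1
  · -- α on unit circle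
    set θ : ℝ := α.arg / (2 * π) with hθ
    have hπ : (0:ℝ) < π := Real.pi_pos
    have hθ1 : -(1/2:ℝ) < θ := by
      rw [hθ, lt_div_iff₀ (by linarith : (0:ℝ) < 2 * π)]
      linarith [Complex.neg_pi_lt_arg α]
    have hθ2 : θ ≤ 1/2 := by
      rw [hθ, div_le_iff₀ (by linarith : (0:ℝ) < 2 * π)]
      linarith [Complex.arg_le_pi α]
    have hαe : α = E θ := by
      have h0 := Complex.norm_mul_exp_arg_mul_I α
      rw [hα] at h0
      simp at h0
      rw [E, ← h0]
      congr 1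
      rw [hθ]
      push_cast
      have : (π:ℂ) ≠ 0 := Complex.ofReal_ne_zero.2 (ne_of_gt hπ)
      field_simp
    rw [hαe]
    have hcong : ∀ᵐ t ∂(volume.restrict (Set.Icc (0:ℝ) 1)),
        Real.log 2 + Real.log |Real.sin (π * (t - θ))|
          = Real.log (‖E t - E θ‖) := by
      have hnull : volume {t : ℝ | Real.sin (π * (t - θ)) = 0} = 0 := by
        apply Set.Countable.measure_zero
        apply Set.Countable.mono _ (Set.countable_range (fun n : ℤ => θ + n))
        intro t ht
        simp only [Set.mem_setOf_eq] at ht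
        rw [Real.sin_eq_zero_iff] at ht
        obtain ⟨n, hn⟩ := ht
        refine ⟨n, ?_⟩
        have h' : (n:ℝ) * π = (t - θ) * π := by linarith [hn]
        have h2 := mul_right_cancel₀ (ne_of_gt hπ) h'
        simp only
        linarith [h2]
      apply ae_restrict_of_ae
      rw [ae_iff]
      apply measure_mono_null _ hnull
      intro t ht
      simp only [Set.mem_setOf_eq] at ht ⊢
      by_contra h0
      apply ht
      rw [key_abs θ t]
      rw [Real.log_mul (by norm_num) (abs_ne_zero.2 h0)]
    have hint : IntegrableOn (fun t => Real.log 2 + Real.log |Real.sin (π * (t - θ))|)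
        (Set.Icc (0:ℝ) 1) volume :=
      (integrableOn_const (by simp)).add (logSinInt θ hθ1 hθ2)
    exact hint.congr hcong
  · -- α off unit circle : continuous integrand
    have hne : ∀ t : ℝ, E t - α ≠ 0 := by
      intro t h
      apply hα
      rw [← sub_eq_zero.1 h]
      exact absE t
    have hE : Continuous E :=
      Complex.continuous_exp.comp (continuous_const.mul Complex.continuous_ofReal)
    have hA : Continuous fun t => ‖E t - α‖ :=
      continuous_norm.comp (hE.sub continuous_const)
    have hcont : Continuous fun t : ℝ => Real.log (‖E t - α‖) := by
      rw [continuous_iff_continuousAt]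
      intro t
      exact ContinuousAt.comp (f := fun t : ℝ => ‖E t - α‖) (g := Real.log)
        (Real.continuousAt_log (norm_ne_zero_iff.mpr (hne t))) hA.continuousAt
    exact hcont.integrableOn_Icc



lemma orth (k : ℤ) : ∫ t in Set.Icc (0:ℝ) 1, Complex.exp (2 * (π:ℂ) * Complex.I * (k:ℂ) * (t:ℂ))
    = if k = 0 then 1 else 0 := by
  by_cases hk : k = 0
  · simp [hk]
  · rw [if_neg hk]
    rw [integral_Icc_eq_integral_Ioc, ← intervalIntegral.integral_of_le zero_le_one]
    have hc : (2 * (π:ℂ) * Complex.I * (k:ℂ)) ≠ 0 := by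
      simp [Real.pi_ne_zero, Complex.I_ne_zero, hk]
    have := integral_exp_mul_complex (a := 0) (b := 1) hc
    rw [this]
    have h1 : 2 * (π:ℂ) * Complex.I * (k:ℂ) * (1:ℝ) = (k:ℂ) * (2 * (π:ℂ) * Complex.I) := by
      push_cast; ring
    have h2 : 2 * (π:ℂ) * Complex.I * (k:ℂ) * ((0:ℝ):ℂ) = 0 := by push_cast; ring
    rw [h1, h2, Complex.exp_int_mul_two_pi_mul_I, Complex.exp_zero, sub_self, zero_div]

section main
variable (L : ℕ) (c : Fin L → ℂ) (p : ℝ → ℂ)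

lemma expand (hp : ∀ t : ℝ, p t = ∑ m : Fin L,
      c m * Complex.exp (2 * (Real.pi : ℂ) * Complex.I * ((m : ℕ) : ℂ) * (t : ℂ)))
    (k : ℤ) :
    ∫ t in Set.Icc (0:ℝ) 1, (p t * (starRingEnd ℂ) (p t)
        * Complex.exp (2 * (π:ℂ) * Complex.I * ((-k : ℤ):ℂ) * (t:ℂ)))
      = ∑ m : Fin L, ∑ n : Fin L,
        (if ((m:ℕ):ℤ) - ((n:ℕ):ℤ) = k then c m * (starRingEnd ℂ) (c n) else 0) := by
  have key : ∀ t : ℝ, p t * (starRingEnd ℂ) (p t)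
      * Complex.exp (2 * (π:ℂ) * Complex.I * ((-k : ℤ):ℂ) * (t:ℂ))
      = ∑ m : Fin L, ∑ n : Fin L, c m * (starRingEnd ℂ) (c n)
          * Complex.exp (2 * (π:ℂ) * Complex.I * (((((m:ℕ):ℤ) - ((n:ℕ):ℤ) - k : ℤ)):ℂ) * (t:ℂ)) := by
    intro t
    rw [hp t, map_sum, Finset.sum_mul_sum, Finset.sum_mul]
    apply Finset.sum_congr rfl
    intro m _
    rw [Finset.sum_mul]
    apply Finset.sum_congr rfl
    intro n _
    have hconj : (starRingEnd ℂ) (2 * (π:ℂ) * Complex.I * ((n:ℕ):ℂ) * (t:ℂ))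
        = -(2 * (π:ℂ) * Complex.I * ((n:ℕ):ℂ) * (t:ℂ)) := by
      simp only [map_mul, Complex.conj_I, Complex.conj_ofReal, map_ofNat, map_natCast]
      ring
    have hsplit : Complex.exp (2 * (π:ℂ) * Complex.I * (((((m:ℕ):ℤ) - ((n:ℕ):ℤ) - k : ℤ)):ℂ) * (t:ℂ))
        = Complex.exp (2 * (π:ℂ) * Complex.I * ((m:ℕ):ℂ) * (t:ℂ))
          * Complex.exp (-(2 * (π:ℂ) * Complex.I * ((n:ℕ):ℂ) * (t:ℂ)))
          * Complex.exp (2 * (π:ℂ) * Complex.I * ((-k : ℤ):ℂ) * (t:ℂ)) := by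
      rw [← Complex.exp_add, ← Complex.exp_add]
      congr 1
      push_cast
      ring
    rw [hsplit, map_mul, ← Complex.exp_conj, hconj]
    ring
  simp_rw [key]
  have hterm : ∀ (z : ℂ) (r : ℤ), IntegrableOn
      (fun t : ℝ => z * Complex.exp (2 * (π:ℂ) * Complex.I * (r:ℂ) * (t:ℂ)))
      (Set.Icc (0:ℝ) 1) volume := by
    intro z r
    exact (continuous_const.mul (Complex.continuous_exp.comp
      (continuous_const.mul Complex.continuous_ofReal))).integrableOn_Icc
  rw [integral_finset_sum]
  · apply Finset.sum_congr rfl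
    intro m _
    rw [integral_finset_sum]
    · apply Finset.sum_congr rfl
      intro n _
      rw [MeasureTheory.integral_const_mul, orth]
      by_cases h : ((m:ℕ):ℤ) - ((n:ℕ):ℤ) - k = 0
      · rw [if_pos h, if_pos (by omega), mul_one]
      · rw [if_neg h, if_neg (by omega), mul_zero]
    · intro n _
      exact hterm _ _
  · intro m _
    exact integrable_finset_sum _ (fun n _ => hterm _ _)
end main



lemma logMultiset : ∀ (s : Multiset ℝ), (∀ x ∈ s, x ≠ 0) →
    Real.log s.prod = (s.map Real.log).sum := by
  intro s
  induction s using Multiset.induction_on with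
  | empty => simp
  | cons a s ih =>
    intro h
    rw [Multiset.prod_cons, Multiset.map_cons, Multiset.sum_cons]
    rw [Real.log_mul (h a (Multiset.mem_cons_self a s))
      (Multiset.prod_ne_zero (fun h0 => h 0 (Multiset.mem_cons_of_mem h0) rfl))]
    rw [ih (fun x hx => h x (Multiset.mem_cons_of_mem hx))]

lemma msInt (s : Multiset ℂ) : IntegrableOn
    (fun t : ℝ => ((s.map (fun α => Real.log (‖E t - α‖))).sum))
    (Set.Icc (0:ℝ) 1) volume := by
  induction s using Multiset.induction_on with
  | empty => simp [integrableOn_const]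
  | cons a s ih =>
    simp only [Multiset.map_cons, Multiset.sum_cons]
    exact (rootInt a).add ih

lemma countE (α : ℂ) : Set.Countable {t : ℝ | E t = α} := by
  rcases Set.eq_empty_or_nonempty {t : ℝ | E t = α} with h | ⟨t₀, ht₀⟩
  · rw [h]; exact Set.countable_empty
  · apply Set.Countable.mono _ (Set.countable_range (fun n : ℤ => t₀ + n))
    intro t ht
    have he : E t = α := ht
    have he₀ : E t₀ = α := ht₀
    have h1 : E t = E t₀ := he.trans he₀.symm
    rw [E, E, Complex.exp_eq_exp_iff_exists_int] at h1
    obtain ⟨n, hn⟩ := h1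
    refine ⟨n, ?_⟩
    have h2 : ((t : ℂ)) = ((t₀ : ℂ)) + n := by
      have hc : (2 * (π:ℂ) * Complex.I) ≠ 0 :=
        mul_ne_zero (mul_ne_zero two_ne_zero (Complex.ofReal_ne_zero.2 Real.pi_ne_zero))
          Complex.I_ne_zero
      have h2' : 2 * (π:ℂ) * Complex.I * (t:ℂ) = 2 * (π:ℂ) * Complex.I * ((t₀:ℂ) + n) := by
        linear_combination hn
      exact mul_left_cancel₀ hc h2'
    have h3 : ((t : ℂ)) = (((t₀ + n : ℝ)) : ℂ) := by rw [h2]; push_cast; ring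
    exact_mod_cast (Complex.ofReal_inj.1 h3).symm


end MahlerAux

open MahlerAux Complex

/-- **Mahler measure bound (key step of Theorems 4.1 and 4.6).** If
`p(t) = ∑_{m=0}^{L-1} c_m e^{2πimt}` where each coefficient is either zero or
of modulus one, and not all vanish, then `log|p|` is integrable on `[0,1]` and
`∫_0^1 log|p(t)| dt < (1/2) log L`. -/
theorem stmt_11 (L : ℕ) (hL : 2 ≤ L) (c : Fin L → ℂ)
    (hc : ∀ m, c m = 0 ∨ ‖c m‖ = 1) (hne : ∃ m, c m ≠ 0)
    (p : ℝ → ℂ)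
    (hp : ∀ t : ℝ, p t = ∑ m : Fin L,
      c m * Complex.exp (2 * (Real.pi : ℂ) * Complex.I * ((m : ℕ) : ℂ) * (t : ℂ))) :
    IntegrableOn (fun t => Real.log (‖p t‖)) (Set.Icc 0 1) volume ∧
    ∫ t in Set.Icc (0:ℝ) 1, Real.log (‖p t‖) ∂volume < Real.log L / 2 := by
  classical
  have hπ := Real.pi_pos
  -- p is continuous
  have hpfun : p = fun t : ℝ => ∑ m : Fin L,
      c m * Complex.exp (2 * (Real.pi : ℂ) * Complex.I * ((m : ℕ) : ℂ) * (↑t : ℂ)) := funext hp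
  have hpc : Continuous p := by
    rw [hpfun]
    exact continuous_finset_sum _ (fun m _ => continuous_const.mul
      (Complex.continuous_exp.comp ((continuous_const.mul Complex.continuous_ofReal))))
  -- polynomial
  set q : Polynomial ℂ := ∑ m : Fin L, Polynomial.C (c m) * Polynomial.X ^ (m:ℕ) with hqdef
  have hcoeff : ∀ m : Fin L, q.coeff (m:ℕ) = c m := by
    intro m
    rw [hqdef, Polynomial.finset_sum_coeff]
    rw [Finset.sum_eq_single m]
    · simp
    · intro n _ hnm
      rw [Polynomial.coeff_C_mul, Polynomial.coeff_X_pow]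
      rw [if_neg (fun h => hnm (Fin.ext (by omega)))]
      ring
    · intro h
      exact absurd (Finset.mem_univ m) h
  have hqne : q ≠ 0 := by
    obtain ⟨m, hm⟩ := hne
    intro h
    apply hm
    rw [← hcoeff m, h, Polynomial.coeff_zero]
  have hqeval : ∀ t : ℝ, p t = q.eval (E t) := by
    intro t
    rw [hp t, hqdef, Polynomial.eval_finset_sum]
    apply Finset.sum_congr rfl
    intro m _
    rw [Polynomial.eval_mul, Polynomial.eval_C, Polynomial.eval_pow, Polynomial.eval_X]
    congr 1
    rw [E, ← Complex.exp_nat_mul]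
    congr 1
    ring
  set a : ℂ := q.leadingCoeff with hadef
  have ha : a ≠ 0 := Polynomial.leadingCoeff_ne_zero.2 hqne
  have hfact : ∀ t : ℝ, p t = a * ((q.roots.map (fun α => E t - α)).prod) := by
    intro t
    rw [hqeval t]
    conv_lhs => rw [(IsAlgClosed.splits q).eq_prod_roots]
    rw [Polynomial.eval_mul, Polynomial.eval_C, Polynomial.eval_multiset_prod, Multiset.map_map]
    rw [← hadef]
    congr 1
    apply congrArg Multiset.prod
    apply Multiset.map_congr rfl
    intro α _
    simp
  -- a.e. nonvanishing
  have hzero_ae : ∀ᵐ t ∂(volume.restrict (Set.Icc (0:ℝ) 1)), p t ≠ 0 := by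
    apply ae_restrict_of_ae
    rw [ae_iff]
    refine measure_mono_null (t := ⋃ α ∈ q.roots.toFinset, {t : ℝ | E t = α}) ?_
      (Set.Countable.measure_zero
        (Set.Countable.biUnion (q.roots.toFinset.countable_toSet) (fun α _ => countE α)) _)
    · intro t ht
      simp only [Set.mem_setOf_eq, not_not] at ht
      rw [hfact t] at ht
      rcases mul_eq_zero.1 ht with h | h
      · exact absurd h ha
      · rw [Multiset.prod_eq_zero_iff] at h
        obtain ⟨α, hα, hα0⟩ := Multiset.mem_map.1 h
        exact Set.mem_biUnion (Multiset.mem_toFinset.2 hα)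
          (show E t = α from sub_eq_zero.1 hα0)
  -- integrability of log |p|
  have hlogint : IntegrableOn (fun t => Real.log (‖p t‖)) (Set.Icc (0:ℝ) 1) volume := by
    have hG : IntegrableOn (fun t : ℝ => Real.log (‖a‖)
        + ((q.roots.map (fun α => Real.log (‖E t - α‖))).sum))
        (Set.Icc (0:ℝ) 1) volume :=
      (integrableOn_const (by simp)).add (msInt q.roots)
    apply hG.congr
    filter_upwards [hzero_ae] with t hpt
    have hfac : ‖p t‖ = ‖a‖
        * ((q.roots.map (fun α => ‖E t - α‖)).prod) := by
      rw [hfact t, norm_mul]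
      congr 1
      exact (map_multiset_prod (normHom : ℂ →*₀ ℝ) _).trans (by rw [Multiset.map_map]; rfl)
    have hnz : ∀ x ∈ q.roots.map (fun α => ‖E t - α‖), x ≠ 0 := by
      intro x hx
      obtain ⟨α, hα, hαx⟩ := Multiset.mem_map.1 hx
      intro h0
      apply hpt
      rw [hfact t]
      apply mul_eq_zero_of_right
      rw [Multiset.prod_eq_zero_iff]
      refine Multiset.mem_map.2 ⟨α, hα, ?_⟩
      rw [← hαx] at h0
      rw [sub_eq_zero]
      have := norm_eq_zero.1 h0
      exact sub_eq_zero.1 this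
    rw [hfac, Real.log_mul (norm_ne_zero_iff.mpr ha)
      (Multiset.prod_ne_zero (fun h0 => (hnz 0 h0) rfl)),
      logMultiset _ hnz, Multiset.map_map]
    rfl
  refine ⟨hlogint, ?_⟩
  -- Parseval
  set Sr : ℝ := ∑ m : Fin L, (‖c m‖)^2 with hSrdef
  have hterm01 : ∀ m : Fin L, (‖c m‖)^2 = 0 ∨ (‖c m‖)^2 = 1 := by
    intro m
    rcases hc m with h | h
    · left; simp [h]
    · right; rw [h]; norm_num
  have hSr1 : 1 ≤ Sr := by
    obtain ⟨m₀, hm₀⟩ := hne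
    have h1 : (‖c m₀‖)^2 = 1 := by
      rcases hc m₀ with h | h
      · exact absurd h hm₀
      · rw [h]; norm_num
    rw [hSrdef, ← h1]
    exact Finset.single_le_sum (f := fun m => (‖c m‖)^2)
      (fun m _ => sq_nonneg _) (Finset.mem_univ m₀)
  have hSrpos : 0 < Sr := by linarith
  have hSrL : Sr ≤ L := by
    rw [hSrdef]
    calc ∑ m : Fin L, (‖c m‖)^2 ≤ ∑ _m : Fin L, (1:ℝ) := by
          apply Finset.sum_le_sum
          intro m _
          rcases hterm01 m with h | h <;> rw [h] <;> norm_num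
      _ = L := by simp
  have hP0 : ∫ t in Set.Icc (0:ℝ) 1, (‖p t‖)^2 ∂volume = Sr := by
    have h1 := expand L c p hp 0
    have h2 : ∀ t : ℝ, p t * (starRingEnd ℂ) (p t)
        * Complex.exp (2 * (π:ℂ) * Complex.I * ((-(0:ℤ) : ℤ):ℂ) * (t:ℂ))
        = (((‖p t‖)^2 : ℝ) : ℂ) := by
      intro t
      rw [Complex.mul_conj]
      push_cast [Complex.normSq_eq_norm_sq]
      simp
    simp_rw [h2] at h1
    have hfint' : IntegrableOn (fun t => (‖p t‖)^2) (Set.Icc (0:ℝ) 1) volume :=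
      ((continuous_norm.comp hpc).pow 2).integrableOn_Icc
    have hof : Integrable (fun t : ℝ => (((‖p t‖)^2 : ℝ) : ℂ))
        (volume.restrict (Set.Icc (0:ℝ) 1)) := hfint'.ofReal
    have h3 : (∑ m : Fin L, ∑ n : Fin L,
        (if ((m:ℕ):ℤ) - ((n:ℕ):ℤ) = 0 then c m * (starRingEnd ℂ) (c n) else 0))
        = ((Sr : ℝ) : ℂ) := by
      rw [hSrdef]
      push_cast
      apply Finset.sum_congr rfl
      intro m _
      rw [Finset.sum_eq_single m]
      · rw [if_pos (sub_self _), Complex.mul_conj]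
        push_cast [Complex.normSq_eq_norm_sq]
        ring
      · intro n _ hnm
        rw [if_neg (fun h => hnm (Fin.ext (by omega)))]
      · intro h
        exact absurd (Finset.mem_univ m) h
    rw [h3] at h1
    have h4 := integral_re hof
    rw [h1] at h4
    simpa [← Complex.ofReal_pow] using h4
  -- integrability of squared log
  have hfint : IntegrableOn (fun t => (‖p t‖)^2) (Set.Icc (0:ℝ) 1) volume :=
    ((continuous_norm.comp hpc).pow 2).integrableOn_Icc
  have hlog2 : (fun t : ℝ => Real.log ((‖p t‖)^2))
      = (fun t : ℝ => 2 * Real.log (‖p t‖)) := by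
    funext t
    rw [Real.log_pow]
    push_cast
    ring
  have hlogf : IntegrableOn (fun t : ℝ => Real.log ((‖p t‖)^2))
      (Set.Icc (0:ℝ) 1) volume := by
    rw [hlog2]
    exact hlogint.const_mul 2
  have hIlog : ∫ t in Set.Icc (0:ℝ) 1, Real.log ((‖p t‖)^2) ∂volume
      = 2 * ∫ t in Set.Icc (0:ℝ) 1, Real.log (‖p t‖) ∂volume := by
    rw [hlog2]
    exact MeasureTheory.integral_const_mul 2 _
  have hconst_int : ∀ r : ℝ, IntegrableOn (fun _ : ℝ => r) (Set.Icc (0:ℝ) 1) volume :=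
    fun r => integrableOn_const (by simp)
  have hconst_val : ∀ r : ℝ, ∫ _ in Set.Icc (0:ℝ) 1, r ∂volume = r := by
    intro r
    rw [setIntegral_const]
    simp [Real.volume_Icc]
  -- the Jensen gap function
  have hA : IntegrableOn (fun t : ℝ => (‖p t‖)^2 / Sr) (Set.Icc (0:ℝ) 1) volume :=
    hfint.div_const Sr
  have hB : IntegrableOn (fun t : ℝ => (‖p t‖)^2 / Sr - 1)
      (Set.Icc (0:ℝ) 1) volume := by
    exact hA.sub (hconst_int 1)
  have hC : IntegrableOn (fun t : ℝ => (‖p t‖)^2 / Sr - 1 + Real.log Sr)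
      (Set.Icc (0:ℝ) 1) volume := by
    exact hB.add (hconst_int (Real.log Sr))
  have hg_int : IntegrableOn (fun t => ((‖p t‖)^2 / Sr - 1 + Real.log Sr)
      - Real.log ((‖p t‖)^2)) (Set.Icc (0:ℝ) 1) volume := by
    exact hC.sub hlogf
  have hg0 : 0 ≤ᵐ[volume.restrict (Set.Icc (0:ℝ) 1)]
      (fun t => ((‖p t‖)^2 / Sr - 1 + Real.log Sr)
        - Real.log ((‖p t‖)^2)) := by
    filter_upwards [hzero_ae] with t hpt
    have hfpos : 0 < (‖p t‖)^2 := pow_pos (norm_pos_iff.mpr hpt) 2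
    have hdiv : 0 < (‖p t‖)^2 / Sr := div_pos hfpos hSrpos
    have hle := Real.log_le_sub_one_of_pos hdiv
    rw [Real.log_div (ne_of_gt hfpos) (ne_of_gt hSrpos)] at hle
    simp only [Pi.zero_apply]
    linarith
  have hg_val : ∫ t in Set.Icc (0:ℝ) 1, (((‖p t‖)^2 / Sr - 1 + Real.log Sr)
      - Real.log ((‖p t‖)^2)) ∂volume
      = Real.log Sr - ∫ t in Set.Icc (0:ℝ) 1, Real.log ((‖p t‖)^2) ∂volume := by
    rw [integral_sub hC hlogf, integral_add hB (hconst_int (Real.log Sr)),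
      integral_sub hA (hconst_int 1), integral_div, hP0, hconst_val, hconst_val]
    field_simp
    ring
  have hjensen : 2 * (∫ t in Set.Icc (0:ℝ) 1, Real.log (‖p t‖) ∂volume)
      ≤ Real.log Sr := by
    have h0 := integral_nonneg_of_ae hg0
    rw [hg_val, hIlog] at h0
    linarith
  by_cases hall : ∀ m, c m ≠ 0
  · -- all coefficients nonzero: Sr = L, use strict case via Fourier coefficient
    have hcm : ∀ m, ‖c m‖ = 1 := by
      intro m
      rcases hc m with h | h
      · exact absurd h (hall m)
      · exact h
    have hSrL' : Sr = L := by
      rw [hSrdef]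
      calc ∑ m : Fin L, (‖c m‖)^2 = ∑ _m : Fin L, (1:ℝ) := by
            apply Finset.sum_congr rfl
            intro m _
            rw [hcm m]; norm_num
        _ = L := by simp
    by_contra hcon
    push_neg at hcon
    have heq : 2 * (∫ t in Set.Icc (0:ℝ) 1, Real.log (‖p t‖) ∂volume)
        = Real.log Sr := by
      rw [hSrL'] at hjensen ⊢
      linarith
    have hgz : (fun t => ((‖p t‖)^2 / Sr - 1 + Real.log Sr)
        - Real.log ((‖p t‖)^2))
        =ᵐ[volume.restrict (Set.Icc (0:ℝ) 1)] 0 := by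
      rw [← integral_eq_zero_iff_of_nonneg_ae hg0 hg_int]
      rw [hg_val, hIlog]
      linarith
    have hfae : (fun t => ((‖p t‖)^2 : ℝ))
        =ᵐ[volume.restrict (Set.Icc (0:ℝ) 1)] (fun _ => Sr) := by
      filter_upwards [hgz, hzero_ae] with t hgt hpt
      simp only [Pi.zero_apply] at hgt
      have hfpos : 0 < (‖p t‖)^2 := pow_pos (norm_pos_iff.mpr hpt) 2
      by_contra hne'
      have hdivne : (‖p t‖)^2 / Sr ≠ 1 := by
        intro h
        exact hne' (by field_simp at h; linarith)
      have hlt := Real.log_lt_sub_one_of_pos (div_pos hfpos hSrpos) hdivne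
      rw [Real.log_div (ne_of_gt hfpos) (ne_of_gt hSrpos)] at hlt
      linarith
    -- Fourier coefficient L-1
    set mL : Fin L := ⟨L - 1, by omega⟩ with hmLdef
    set m0 : Fin L := ⟨0, by omega⟩ with hm0def
    have hmLv : (mL:ℕ) = L - 1 := rfl
    have hm0v : (m0:ℕ) = 0 := rfl
    have hexp := expand L c p hp ((L:ℤ) - 1)
    have hsum : (∑ m : Fin L, ∑ n : Fin L,
        (if ((m:ℕ):ℤ) - ((n:ℕ):ℤ) = (L:ℤ) - 1 then c m * (starRingEnd ℂ) (c n) else 0))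
        = c mL * (starRingEnd ℂ) (c m0) := by
      rw [Finset.sum_eq_single mL]
      · rw [Finset.sum_eq_single m0]
        · rw [if_pos (by rw [hmLv, hm0v]; omega)]
        · intro n _ hn
          apply if_neg
          rw [hmLv]
          intro h
          apply hn
          apply Fin.ext
          rw [hm0v]
          omega
        · intro h; exact absurd (Finset.mem_univ m0) h
      · intro m _ hm
        apply Finset.sum_eq_zero
        intro n _
        apply if_neg
        intro h
        apply hm
        apply Fin.ext
        rw [hmLv]
        have h1 := m.isLt
        have h2 := n.isLt
        omega
      · intro h; exact absurd (Finset.mem_univ mL) h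
    have hcong : (fun t : ℝ => p t * (starRingEnd ℂ) (p t)
        * Complex.exp (2 * (π:ℂ) * Complex.I * ((-((L:ℤ) - 1) : ℤ):ℂ) * (t:ℂ)))
        =ᵐ[volume.restrict (Set.Icc (0:ℝ) 1)]
        (fun t : ℝ => ((Sr:ℝ):ℂ)
          * Complex.exp (2 * (π:ℂ) * Complex.I * ((-((L:ℤ) - 1) : ℤ):ℂ) * (t:ℂ))) := by
      filter_upwards [hfae] with t hft
      rw [Complex.mul_conj]
      congr 1
      rw [Complex.normSq_eq_norm_sq, hft]
    have hzero : c mL * (starRingEnd ℂ) (c m0) = 0 := by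
      rw [← hsum, ← hexp]
      rw [integral_congr_ae hcong]
      rw [MeasureTheory.integral_const_mul, orth, if_neg (by omega), mul_zero]
    have habs := congrArg (fun z : ℂ => ‖z‖) hzero
    rw [norm_mul, hcm mL, Complex.norm_conj, hcm m0] at habs
    norm_num at habs
  · push_neg at hall
    obtain ⟨m₀, hm₀⟩ := hall
    have hSrL1 : Sr ≤ (L:ℝ) - 1 := by
      rw [hSrdef]
      have herase : ∑ m : Fin L, (‖c m‖)^2
          = ∑ m ∈ Finset.univ.erase m₀, (‖c m‖)^2 := by
        rw [Finset.sum_erase]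
        simp [hm₀]
      rw [herase]
      calc ∑ m ∈ Finset.univ.erase m₀, (‖c m‖)^2
          ≤ ∑ _m ∈ Finset.univ.erase m₀, (1:ℝ) := by
            apply Finset.sum_le_sum
            intro m _
            rcases hterm01 m with h | h <;> rw [h] <;> norm_num
        _ = ((L - 1 : ℕ) : ℝ) := by
            rw [Finset.sum_const]
            rw [Finset.card_erase_of_mem (Finset.mem_univ m₀)]
            simp
        _ = (L:ℝ) - 1 := by
            push_cast [Nat.cast_sub (by omega : 1 ≤ L)]
            ring
    have hlt : Real.log Sr < Real.log L :=
      Real.log_lt_log hSrpos (by linarith : Sr < (L:ℝ))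
    linarith [hjensen]
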